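/- Given Petz data (V, X, Y, V_N, M, K, X_P, Y_P), one has the factorization identity Y_P + iΩ_n − i X_P Ω_m X_Pᵀ = M V [ (V − iΩ_n)^{-1} − Xᵀ (V_N − iΩ_m)^{-1} X ] V Mᵀ, as an identity of complex 2n×2n matrices. -/

import Mathlib

set_option linter.unusedSectionVars false
set_option linter.unusedVariables false
set_option maxHeartbeats 1000000

noncomputable section
open Matrix Polynomial
open scoped ComplexOrder

/-- The standard `2n × 2n` symplectic form matrix `Ω = [[0, I], [-I, 0]]`. -/
def Om (n : ℕ) : Matrix (Fin n ⊕ Fin n) (Fin n ⊕ Fin n) ℝ :=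
  Matrix.fromBlocks 0 1 (-1) 0

/-- Complexification of a real matrix. -/
def cm {k l : Type*} (A : Matrix k l ℝ) : Matrix k l ℂ := A.map Complex.ofReal

variable {N L : Type*} [Fintype N] [DecidableEq N] [Fintype L] [DecidableEq L]

lemma cm_mul {k l o : Type*} [Fintype l] (A : Matrix k l ℝ) (B : Matrix l o ℝ) :
    cm (A * B) = cm A * cm B :=
  Matrix.map_mul (f := Complex.ofRealHom)

lemma cm_add {k l : Type*} (A B : Matrix k l ℝ) : cm (A + B) = cm A + cm B :=
  Matrix.map_add _ (by simp) _ _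

lemma cm_sub {k l : Type*} (A B : Matrix k l ℝ) : cm (A - B) = cm A - cm B :=
  Matrix.map_sub _ (by simp) _ _

lemma cm_one : cm (1 : Matrix N N ℝ) = 1 := Matrix.map_one _ (by simp) (by simp)

lemma cm_transpose {k l : Type*} (A : Matrix k l ℝ) : cm (Aᵀ) = (cm A)ᵀ :=
  Matrix.transpose_map

lemma cm_det (A : Matrix N N ℝ) : (cm A).det = Complex.ofReal A.det := by
  exact (RingHom.map_det Complex.ofRealHom A).symm

lemma cm_inv (A : Matrix N N ℝ) (h : IsUnit (cm A).det) : cm (A⁻¹) = (cm A)⁻¹ := by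
  have hdet : IsUnit A.det := by
    rw [cm_det] at h
    rcases eq_or_ne A.det 0 with h0 | h0
    · simp [h0] at h
    · exact h0.isUnit
  refine (Matrix.inv_eq_left_inv ?_).symm
  rw [← cm_mul, Matrix.nonsing_inv_mul _ hdet, cm_one]

lemma cm_conjTranspose {k l : Type*} (A : Matrix k l ℝ) : (cm A)ᴴ = (cm A)ᵀ := by
  ext i j
  simp [cm, Matrix.conjTranspose_apply]

/-- evaluation of the characteristic polynomial -/
lemma charpoly_eval (A : Matrix N N ℂ) (μ : ℂ) :
    A.charpoly.eval μ = (μ • (1 : Matrix N N ℂ) - A).det := by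
  rw [Matrix.charpoly, ← Polynomial.coe_evalRingHom, RingHom.map_det]
  congr 1
  ext i j
  by_cases h : i = j <;>
    simp [Matrix.charmatrix_apply, Matrix.one_apply, h, Matrix.diagonal_apply]

lemma comm_inv (A B : Matrix N N ℂ) (h : A * B = B * A) (hB : IsUnit B.det) :
    A * B⁻¹ = B⁻¹ * A := by
  have h1 := Matrix.nonsing_inv_mul B hB
  have h2 := Matrix.mul_nonsing_inv B hB
  calc A * B⁻¹ = B⁻¹ * B * A * B⁻¹ := by rw [h1, Matrix.one_mul]
    _ = B⁻¹ * (A * B) * B⁻¹ := by rw [h]; noncomm_ring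
    _ = B⁻¹ * A := by
        simp only [Matrix.mul_assoc, h2, Matrix.mul_one]

/-- uniqueness of square roots with positive spectra -/
lemma sqrt_eq (P Q : Matrix N N ℂ) (hsq : P * P = Q * Q)
    (hP : ∀ μ : ℂ, P.charpoly.IsRoot μ → μ.im = 0 ∧ 0 < μ.re)
    (hQ : ∀ μ : ℂ, Q.charpoly.IsRoot μ → μ.im = 0 ∧ 0 < μ.re) :
    P = Q := by
  set Z := P - Q with hZ
  have key : P * Z = Z * (-Q) := by
    rw [hZ, mul_sub, sub_mul, hsq]; noncomm_ring
  have hpow : ∀ k : ℕ, P ^ k * Z = Z * (-Q) ^ k := by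
    intro k
    induction k with
    | zero => simp
    | succ k ih =>
        rw [pow_succ, pow_succ, ← Matrix.mul_assoc, ← ih]
        calc P ^ k * P * Z = P ^ k * (P * Z) := by rw [Matrix.mul_assoc]
          _ = P ^ k * (Z * -Q) := by rw [key]
          _ = P ^ k * Z * -Q := by rw [Matrix.mul_assoc]
  have haeval : ∀ p : ℂ[X], (aeval P p) * Z = Z * aeval (-Q) p := by
    intro p
    induction p using Polynomial.induction_on' with
    | add p q hp hq => rw [map_add, map_add, add_mul, mul_add, hp, hq]
    | monomial k a =>
        rw [aeval_monomial, aeval_monomial, mul_assoc, hpow, ← mul_assoc,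
          Algebra.commutes, mul_assoc]
  have h0 : Z * aeval (-Q) P.charpoly = 0 := by
    rw [← haeval, Matrix.aeval_self_charpoly, zero_mul]
  have hsplit : P.charpoly = (P.charpoly.roots.map fun r => X - C r).prod :=
    (IsAlgClosed.splits _).eq_prod_roots_of_monic P.charpoly_monic
  set L : List ℂ[X] := (P.charpoly.roots.map fun r => X - C r).toList with hL
  have hsplit2 : P.charpoly = L.prod := by
    rw [hL, Multiset.prod_toList, ← hsplit]
  have hunit : IsUnit (aeval (-Q) P.charpoly) := by
    rw [Matrix.isUnit_iff_isUnit_det, isUnit_iff_ne_zero, hsplit2, map_list_prod,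
      ← Matrix.coe_detMonoidHom, map_list_prod]
    refine List.prod_ne_zero ?_
    intro hmem
    rw [List.mem_map] at hmem
    obtain ⟨A, hA, hA0⟩ := hmem
    rw [List.mem_map] at hA
    obtain ⟨p, hp, rfl⟩ := hA
    rw [hL, Multiset.mem_toList, Multiset.mem_map] at hp
    obtain ⟨r, hr, rfl⟩ := hp
    have hroot := hP r (Polynomial.isRoot_of_mem_roots hr)
    have hval : aeval (-Q) (X - C r) = (-r) • (1 : Matrix N N ℂ) - Q := by
      simp only [map_sub, aeval_X, aeval_C, Algebra.algebraMap_eq_smul_one, neg_smul]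
      abel
    have hq : Q.charpoly.IsRoot (-r) := by
      rw [Polynomial.IsRoot, charpoly_eval, ← hval]
      simpa [Matrix.coe_detMonoidHom] using hA0
    have := (hQ (-r) hq).2
    rw [Complex.neg_re] at this
    linarith [hroot.2]
  have hZ0 : Z = 0 := by
    have hdet := Matrix.isUnit_iff_isUnit_det _ |>.1 hunit
    have := congrArg (fun W => W * (aeval (-Q) P.charpoly)⁻¹) h0
    simpa [Matrix.mul_assoc, Matrix.mul_nonsing_inv _ hdet] using this
  rw [← sub_eq_zero]; exact hZ0

lemma Om_mul_Om (k : ℕ) : Om k * Om k = -1 := by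
  simp only [Om, Matrix.fromBlocks_multiply]
  norm_num
  ext (i | i) (j | j) <;>
    simp [Matrix.fromBlocks, Matrix.one_apply]

lemma Om_transpose (k : ℕ) : (Om k)ᵀ = -Om k := by
  simp only [Om, Matrix.fromBlocks_transpose]
  norm_num
  ext (i | i) (j | j) <;>
    simp [Matrix.fromBlocks]
variable {N L : Type*} [Fintype N] [DecidableEq N] [Fintype L] [DecidableEq L]

lemma spec_isUnit (A : Matrix N N ℂ)
    (hA : ∀ μ : ℂ, A.charpoly.IsRoot μ → μ.im = 0 ∧ 0 < μ.re) :
    IsUnit A.det := by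
  rw [isUnit_iff_ne_zero]
  intro h0
  have : A.charpoly.IsRoot 0 := by
    rw [Polynomial.IsRoot, charpoly_eval, zero_smul, zero_sub, Matrix.det_neg, h0, mul_zero]
  simpa using (hA 0 this).2

lemma smul_one_sub_conj (U A : Matrix N N ℂ) (hU : IsUnit U.det) (μ : ℂ) :
    μ • (1 : Matrix N N ℂ) - U * A * U⁻¹ = U * (μ • 1 - A) * U⁻¹ := by
  rw [Matrix.mul_sub, Matrix.sub_mul, Matrix.mul_smul, Matrix.mul_one, Matrix.smul_mul,
    Matrix.mul_nonsing_inv _ hU]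

lemma charpoly_root_conj (U A : Matrix N N ℂ) (hU : IsUnit U.det) (μ : ℂ) :
    (U * A * U⁻¹).charpoly.IsRoot μ ↔ A.charpoly.IsRoot μ := by
  have hdet : (μ • (1 : Matrix N N ℂ) - U * A * U⁻¹).det = (μ • 1 - A).det := by
    rw [smul_one_sub_conj U A hU, Matrix.det_mul, Matrix.det_mul, Matrix.det_nonsing_inv,
      mul_comm U.det, mul_assoc, Ring.mul_inverse_cancel _ hU, mul_one]
  rw [Polynomial.IsRoot, Polynomial.IsRoot, charpoly_eval, charpoly_eval, hdet]

lemma charpoly_root_transpose (A : Matrix N N ℂ) (μ : ℂ) :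
    (Aᵀ).charpoly.IsRoot μ ↔ A.charpoly.IsRoot μ := by
  rw [Polynomial.IsRoot, Polynomial.IsRoot, charpoly_eval, charpoly_eval]
  rw [← Matrix.det_transpose (μ • 1 - A), Matrix.transpose_sub, Matrix.transpose_smul,
    Matrix.transpose_one]

lemma conjug_inv (U A : Matrix N N ℂ) (hU : IsUnit U.det) (hA : IsUnit A.det) :
    (U * A * U⁻¹)⁻¹ = U * A⁻¹ * U⁻¹ := by
  refine Matrix.inv_eq_right_inv ?_
  calc U * A * U⁻¹ * (U * A⁻¹ * U⁻¹)
      = U * A * (U⁻¹ * U) * A⁻¹ * U⁻¹ := by noncomm_ring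
    _ = U * (A * A⁻¹) * U⁻¹ := by
        rw [Matrix.nonsing_inv_mul _ hU]; noncomm_ring
    _ = 1 := by rw [Matrix.mul_nonsing_inv _ hA, Matrix.mul_one,
        Matrix.mul_nonsing_inv _ hU]

lemma posDef_mul_mul (A : Matrix N N ℂ) (hA : A.PosDef) (C : Matrix L N ℂ)
    (hC : ∀ x : L → ℂ, Cᴴ *ᵥ x = 0 → x = 0) :
    (C * A * Cᴴ).PosDef := by
  rw [Matrix.posDef_iff_dotProduct_mulVec]
  constructor
  · have := hA.isHermitian
    rw [Matrix.IsHermitian, Matrix.conjTranspose_mul, Matrix.conjTranspose_mul,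
      Matrix.conjTranspose_conjTranspose, this.eq, Matrix.mul_assoc]
  · intro x hx
    have hy : Cᴴ *ᵥ x ≠ 0 := fun h => hx (hC x h)
    have : star x ⬝ᵥ (C * A * Cᴴ) *ᵥ x = star (Cᴴ *ᵥ x) ⬝ᵥ A *ᵥ (Cᴴ *ᵥ x) := by
      rw [← Matrix.mulVec_mulVec, ← Matrix.mulVec_mulVec, Matrix.dotProduct_mulVec (star x) C,
        Matrix.star_mulVec, Matrix.conjTranspose_conjTranspose]
    rw [this]
    exact hA.dotProduct_mulVec_pos hy

lemma cm_neg {k l : Type*} (A : Matrix k l ℝ) : cm (-A) = -cm A := by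
  ext i j; simp [cm]

lemma matInvNeg (A : Matrix N N ℂ) (h : IsUnit A.det) : (-A)⁻¹ = -A⁻¹ := by
  refine Matrix.inv_eq_right_inv ?_
  rw [Matrix.neg_mul, Matrix.mul_neg, neg_neg, Matrix.mul_nonsing_inv _ h]

/-- Given Petz data `(V, X, Y, V_N, M, K, X_P, Y_P)`, one has the factorization identity
`Y_P + iΩ_n - i X_P Ω_m X_Pᵀ = M V [(V - iΩ_n)⁻¹ - Xᵀ (V_N - iΩ_m)⁻¹ X] V Mᵀ`
as complex `2n × 2n` matrices. -/
theorem petz_cp_factorization (n m : ℕ) (hmn : m ≤ n)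
    (V M : Matrix (Fin n ⊕ Fin n) (Fin n ⊕ Fin n) ℝ)
    (X : Matrix (Fin m ⊕ Fin m) (Fin n ⊕ Fin n) ℝ)
    (Y VN K : Matrix (Fin m ⊕ Fin m) (Fin m ⊕ Fin m) ℝ)
    (XP : Matrix (Fin n ⊕ Fin n) (Fin m ⊕ Fin m) ℝ)
    (YP : Matrix (Fin n ⊕ Fin n) (Fin n ⊕ Fin n) ℝ)
    (hV : V.IsSymm)
    (hVpd : (cm V + Complex.I • cm (Om n)).PosDef)
    (hXrank : X.rank = 2 * m)
    (hY : Y.IsSymm)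
    (hYcp : (cm Y + Complex.I • cm (Om m)
        - Complex.I • (cm X * cm (Om n) * (cm X)ᵀ)).PosSemidef)
    (hVN : VN = X * V * Xᵀ + Y)
    (hM2 : M * M = 1 + ((V * Om n)⁻¹) ^ 2)
    (hMcomm : M * (V * Om n) = (V * Om n) * M)
    (hMeig : ∀ μ : ℂ, (cm M).charpoly.IsRoot μ → μ.im = 0 ∧ 0 < μ.re)
    (hK2 : K * K = 1 + ((Om m * VN)⁻¹) ^ 2)
    (hKcomm : K * (Om m * VN) = (Om m * VN) * K)
    (hKeig : ∀ μ : ℂ, (cm K).charpoly.IsRoot μ → μ.im = 0 ∧ 0 < μ.re)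
    (hXP : XP = M * V * Xᵀ * K⁻¹ * VN⁻¹)
    (hYP : YP = V - XP * VN * XPᵀ) :
    cm YP + Complex.I • cm (Om n) - Complex.I • (cm XP * cm (Om m) * (cm XP)ᵀ)
      = cm M * cm V
          * ((cm V - Complex.I • cm (Om n))⁻¹
              - (cm X)ᵀ * (cm VN - Complex.I • cm (Om m))⁻¹ * cm X)
          * cm V * (cm M)ᵀ := by
  -- notation
  set Vc := cm V with hVc_def
  set Oc := cm (Om n) with hOc_def
  set oc := cm (Om m) with hoc_def
  set Mc := cm M with hMc_def
  set Kc := cm K with hKc_def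
  set Xc := cm X with hXc_def
  set VNc := cm VN with hVNc_def
  -- basic symplectic facts
  have hOO : Oc * Oc = -1 := by rw [hOc_def, ← cm_mul, Om_mul_Om, cm_neg, cm_one]
  have hoo : oc * oc = -1 := by rw [hoc_def, ← cm_mul, Om_mul_Om, cm_neg, cm_one]
  have hOT : Ocᵀ = -Oc := by rw [hOc_def, ← cm_transpose, Om_transpose, cm_neg]
  have hoT : ocᵀ = -oc := by rw [hoc_def, ← cm_transpose, Om_transpose, cm_neg]
  have hOunit : IsUnit Oc.det := by
    refine Matrix.isUnit_det_of_right_inverse (B := -Oc) ?_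
    rw [Matrix.mul_neg, hOO, neg_neg]
  have hounit : IsUnit oc.det := by
    refine Matrix.isUnit_det_of_right_inverse (B := -oc) ?_
    rw [Matrix.mul_neg, hoo, neg_neg]
  have hOinv : Oc⁻¹ = -Oc := by
    refine Matrix.inv_eq_right_inv ?_
    rw [Matrix.mul_neg, hOO, neg_neg]
  have hoinv : oc⁻¹ = -oc := by
    refine Matrix.inv_eq_right_inv ?_
    rw [Matrix.mul_neg, hoo, neg_neg]
  have hVsym : Vcᵀ = Vc := by rw [hVc_def, ← cm_transpose, hV.eq]
  -- positive definiteness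
  have hApd : (Vc + Complex.I • Oc).PosDef := hVpd
  have hAmpd : (Vc - Complex.I • Oc).PosDef := by
    have := hApd.transpose
    rwa [Matrix.transpose_add, Matrix.transpose_smul, hVsym, hOT, smul_neg,
      ← sub_eq_add_neg] at this
  have hVunit : IsUnit Vc.det := by
    have hsum : ((Vc + Complex.I • Oc) + (Vc - Complex.I • Oc)).PosDef :=
      hApd.add hAmpd
    have h2 : (Vc + Complex.I • Oc) + (Vc - Complex.I • Oc) = (2 : ℂ) • Vc := by
      rw [two_smul]; abel
    rw [h2] at hsum
    have := hsum.isUnit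
    rw [Matrix.isUnit_iff_isUnit_det, Matrix.det_smul, isUnit_iff_ne_zero] at this
    rw [isUnit_iff_ne_zero]
    intro h0
    rw [h0, mul_zero] at this
    exact this rfl
  -- X full rank : injectivity of Xcᵀ *ᵥ
  have hXXT : IsUnit (X * Xᵀ) := by
    have hr : (X * Xᵀ).rank = Fintype.card (Fin m ⊕ Fin m) := by
      rw [Matrix.rank_self_mul_transpose, hXrank]
      simp [two_mul]
    rw [← Matrix.mulVec_surjective_iff_isUnit]
    rw [Matrix.rank] at hr
    have htop : LinearMap.range (X * Xᵀ).mulVecLin = ⊤ :=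
      Submodule.eq_top_of_finrank_eq (by rw [hr, Module.finrank_pi])
    intro y
    obtain ⟨x, hx⟩ := LinearMap.range_eq_top.mp htop y
    exact ⟨x, hx⟩
  have hXXTc : IsUnit (Xc * Xcᵀ).det := by
    rw [hXc_def, ← cm_transpose, ← cm_mul, cm_det, isUnit_iff_ne_zero]
    have h1 : (X * Xᵀ).det ≠ 0 :=
      isUnit_iff_ne_zero.mp ((Matrix.isUnit_iff_isUnit_det _).mp hXXT)
    simpa using h1
  have hXinj : ∀ x : (Fin m ⊕ Fin m) → ℂ, Xcᵀ *ᵥ x = 0 → x = 0 := by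
    intro x hx
    have h1 : (Xc * Xcᵀ) *ᵥ x = (Xc * Xcᵀ) *ᵥ 0 := by
      rw [← Matrix.mulVec_mulVec, hx, Matrix.mulVec_zero, Matrix.mulVec_zero]
    exact Matrix.mulVec_injective_iff_isUnit.mpr
      ((Matrix.isUnit_iff_isUnit_det _).mpr hXXTc) h1
  -- VN positive definiteness
  have hVNsym : VNcᵀ = VNc := by
    have : VN.IsSymm := by
      rw [hVN, Matrix.IsSymm, Matrix.transpose_add, Matrix.transpose_mul,
        Matrix.transpose_mul, Matrix.transpose_transpose, hV.eq, hY.eq,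
        Matrix.mul_assoc]
    rw [hVNc_def, ← cm_transpose, this.eq]
  have hXH : Xcᴴ = Xcᵀ := cm_conjTranspose X
  have hBpd : (VNc + Complex.I • oc).PosDef := by
    have hcongr : (Xc * (Vc + Complex.I • Oc) * Xcᴴ).PosDef := by
      refine posDef_mul_mul _ hApd Xc ?_
      intro x hx
      exact hXinj x (by rwa [← hXH])
    have hsplitB : VNc + Complex.I • oc
        = Xc * (Vc + Complex.I • Oc) * Xcᴴ
          + (cm Y + Complex.I • oc - Complex.I • (Xc * Oc * Xcᵀ)) := by
      rw [hXH, hVNc_def, hVN, cm_add, cm_mul, cm_mul, cm_transpose,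
        ← hXc_def, ← hVc_def]
      rw [Matrix.mul_add, Matrix.add_mul, Matrix.mul_smul, Matrix.smul_mul]
      abel
    rw [hsplitB]
    exact hcongr.add_posSemidef hYcp
  have hBmpd : (VNc - Complex.I • oc).PosDef := by
    have := hBpd.transpose
    rwa [Matrix.transpose_add, Matrix.transpose_smul, hVNsym, hoT, smul_neg,
      ← sub_eq_add_neg] at this
  have hVNunit : IsUnit VNc.det := by
    have hsum : ((VNc + Complex.I • oc) + (VNc - Complex.I • oc)).PosDef :=
      hBpd.add hBmpd
    have h2 : (VNc + Complex.I • oc) + (VNc - Complex.I • oc) = (2 : ℂ) • VNc := by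
      rw [two_smul]; abel
    rw [h2] at hsum
    have := hsum.isUnit
    rw [Matrix.isUnit_iff_isUnit_det, Matrix.det_smul, isUnit_iff_ne_zero] at this
    rw [isUnit_iff_ne_zero]
    intro h0
    rw [h0, mul_zero] at this
    exact this rfl
  have hMunit : IsUnit Mc.det := spec_isUnit _ hMeig
  have hKunit : IsUnit Kc.det := spec_isUnit _ hKeig
  -- S and T
  set S := Vc * Oc with hS_def
  set T := oc * VNc with hT_def
  have hSunit : IsUnit S.det := by rw [hS_def, Matrix.det_mul]; exact hVunit.mul hOunit
  have hTunit : IsUnit T.det := by rw [hT_def, Matrix.det_mul]; exact hounit.mul hVNunit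
  -- complexified hypotheses
  have hScm : cm (V * Om n) = S := by rw [cm_mul, ← hVc_def, ← hOc_def, hS_def]
  have hVOunit : IsUnit (cm (V * Om n)).det := by rw [hScm]; exact hSunit
  have hM2c : Mc * Mc = 1 + S⁻¹ * S⁻¹ := by
    have h := congrArg cm hM2
    rw [pow_two] at h
    rw [cm_mul, cm_add, cm_one, cm_mul, cm_inv _ hVOunit, hScm, ← hMc_def] at h
    exact h
  have hMcommc : Mc * S = S * Mc := by
    rw [hMc_def, hS_def, hVc_def, hOc_def]
    simp only [← cm_mul]
    rw [hMcomm]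
  have hTcm : cm (Om m * VN) = T := by rw [cm_mul, ← hVNc_def, ← hoc_def, hT_def]
  have hOVNunit : IsUnit (cm (Om m * VN)).det := by rw [hTcm]; exact hTunit
  have hK2c : Kc * Kc = 1 + T⁻¹ * T⁻¹ := by
    have h := congrArg cm hK2
    rw [pow_two] at h
    rw [cm_mul, cm_add, cm_one, cm_mul, cm_inv _ hOVNunit, hTcm, ← hKc_def] at h
    exact h
  have hKcommc : Kc * T = T * Kc := by
    rw [hKc_def, hT_def, hVNc_def, hoc_def]
    simp only [← cm_mul]
    rw [hKcomm]
  have hXPc : cm XP = Mc * Vc * Xcᵀ * Kc⁻¹ * VNc⁻¹ := by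
    rw [hXP]
    simp only [cm_mul]
    rw [cm_inv _ hKunit, cm_inv _ hVNunit, cm_transpose, ← hMc_def, ← hVc_def,
      ← hXc_def, ← hKc_def, ← hVNc_def]
  have hYPc : cm YP = Vc - cm XP * VNc * (cm XP)ᵀ := by
    rw [hYP, cm_sub, cm_mul, cm_mul, cm_transpose]
  -- symmetry of M V and K VN
  have hMVsym : Vc * Mcᵀ = Mc * Vc := by
    have hSTdet : IsUnit (Sᵀ).det := by rw [Matrix.det_transpose]; exact hSunit
    have hVST : Vc * Sᵀ * Vc⁻¹ = -S := by
      rw [hS_def, Matrix.transpose_mul, hOT, hVsym]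
      calc Vc * (-Oc * Vc) * Vc⁻¹ = -(Vc * Oc) * (Vc * Vc⁻¹) := by
            simp only [Matrix.neg_mul, Matrix.mul_neg, Matrix.mul_assoc]
        _ = -(Vc * Oc) := by rw [Matrix.mul_nonsing_inv _ hVunit, Matrix.mul_one]
    have hVSTinv : Vc * (Sᵀ)⁻¹ * Vc⁻¹ = -S⁻¹ := by
      rw [← conjug_inv Vc (Sᵀ) hVunit hSTdet, hVST, matInvNeg _ hSunit]
    have hQsq : Mc * Mc = (Vc * Mcᵀ * Vc⁻¹) * (Vc * Mcᵀ * Vc⁻¹) := by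
      have hMT2 : Mcᵀ * Mcᵀ = 1 + (Sᵀ)⁻¹ * (Sᵀ)⁻¹ := by
        rw [← Matrix.transpose_mul, hM2c, Matrix.transpose_add, Matrix.transpose_one,
          Matrix.transpose_mul, Matrix.transpose_nonsing_inv]
      have e1 : (Vc * Mcᵀ * Vc⁻¹) * (Vc * Mcᵀ * Vc⁻¹)
          = Vc * (Mcᵀ * Mcᵀ) * Vc⁻¹ := by
        calc (Vc * Mcᵀ * Vc⁻¹) * (Vc * Mcᵀ * Vc⁻¹)
            = Vc * Mcᵀ * (Vc⁻¹ * Vc) * (Mcᵀ * Vc⁻¹) := by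
              simp only [Matrix.mul_assoc]
          _ = Vc * (Mcᵀ * Mcᵀ) * Vc⁻¹ := by
              rw [Matrix.nonsing_inv_mul _ hVunit, Matrix.mul_one]
              simp only [Matrix.mul_assoc]
      rw [e1, hMT2]
      rw [Matrix.mul_add, Matrix.add_mul, Matrix.mul_one,
        Matrix.mul_nonsing_inv _ hVunit]
      have e2 : Vc * ((Sᵀ)⁻¹ * (Sᵀ)⁻¹) * Vc⁻¹
          = (Vc * (Sᵀ)⁻¹ * Vc⁻¹) * (Vc * (Sᵀ)⁻¹ * Vc⁻¹) := by
        calc Vc * ((Sᵀ)⁻¹ * (Sᵀ)⁻¹) * Vc⁻¹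
            = Vc * (Sᵀ)⁻¹ * (Vc⁻¹ * Vc) * ((Sᵀ)⁻¹ * Vc⁻¹) := by
              rw [Matrix.nonsing_inv_mul _ hVunit, Matrix.mul_one]
              simp only [Matrix.mul_assoc]
          _ = (Vc * (Sᵀ)⁻¹ * Vc⁻¹) * (Vc * (Sᵀ)⁻¹ * Vc⁻¹) := by
              simp only [Matrix.mul_assoc]
      rw [e2, hVSTinv, neg_mul_neg, hM2c]
    have hQeig : ∀ μ : ℂ, (Vc * Mcᵀ * Vc⁻¹).charpoly.IsRoot μ → μ.im = 0 ∧ 0 < μ.re := by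
      intro μ h
      rw [charpoly_root_conj Vc (Mcᵀ) hVunit, charpoly_root_transpose] at h
      exact hMeig μ h
    have hMQ : Mc = Vc * Mcᵀ * Vc⁻¹ := sqrt_eq _ _ hQsq hMeig hQeig
    calc Vc * Mcᵀ = Vc * Mcᵀ * (Vc⁻¹ * Vc) := by
          rw [Matrix.nonsing_inv_mul _ hVunit, Matrix.mul_one]
      _ = (Vc * Mcᵀ * Vc⁻¹) * Vc := by simp only [Matrix.mul_assoc]
      _ = Mc * Vc := by rw [← hMQ]
  have hKVNsym : Kcᵀ * VNc = VNc * Kc := by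
    have hVNinv_unit : IsUnit (VNc⁻¹).det := Matrix.isUnit_nonsing_inv_det _ hVNunit
    have hVNinvinv : (VNc⁻¹)⁻¹ = VNc := Matrix.nonsing_inv_nonsing_inv _ hVNunit
    have hTTdet : IsUnit (Tᵀ).det := by rw [Matrix.det_transpose]; exact hTunit
    have hVNT : VNc⁻¹ * Tᵀ * (VNc⁻¹)⁻¹ = -T := by
      rw [hVNinvinv, hT_def, Matrix.transpose_mul, hoT, hVNsym]
      calc VNc⁻¹ * (VNc * -oc) * VNc
          = (VNc⁻¹ * VNc) * (-oc * VNc) := by simp only [Matrix.mul_assoc]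
        _ = -(oc * VNc) := by
            rw [Matrix.nonsing_inv_mul _ hVNunit, Matrix.one_mul, Matrix.neg_mul]
    have hVNTinv : VNc⁻¹ * (Tᵀ)⁻¹ * (VNc⁻¹)⁻¹ = -T⁻¹ := by
      rw [← conjug_inv (VNc⁻¹) (Tᵀ) hVNinv_unit hTTdet, hVNT, matInvNeg _ hTunit]
    have hQsq : Kc * Kc = (VNc⁻¹ * Kcᵀ * (VNc⁻¹)⁻¹) * (VNc⁻¹ * Kcᵀ * (VNc⁻¹)⁻¹) := by
      have hKT2 : Kcᵀ * Kcᵀ = 1 + (Tᵀ)⁻¹ * (Tᵀ)⁻¹ := by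
        rw [← Matrix.transpose_mul, hK2c, Matrix.transpose_add, Matrix.transpose_one,
          Matrix.transpose_mul, Matrix.transpose_nonsing_inv]
      have e1 : (VNc⁻¹ * Kcᵀ * (VNc⁻¹)⁻¹) * (VNc⁻¹ * Kcᵀ * (VNc⁻¹)⁻¹)
          = VNc⁻¹ * (Kcᵀ * Kcᵀ) * (VNc⁻¹)⁻¹ := by
        calc (VNc⁻¹ * Kcᵀ * (VNc⁻¹)⁻¹) * (VNc⁻¹ * Kcᵀ * (VNc⁻¹)⁻¹)
            = VNc⁻¹ * Kcᵀ * ((VNc⁻¹)⁻¹ * VNc⁻¹) * (Kcᵀ * (VNc⁻¹)⁻¹) := by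
              simp only [Matrix.mul_assoc]
          _ = VNc⁻¹ * (Kcᵀ * Kcᵀ) * (VNc⁻¹)⁻¹ := by
              rw [Matrix.nonsing_inv_mul _ hVNinv_unit, Matrix.mul_one]
              simp only [Matrix.mul_assoc]
      rw [e1, hKT2]
      rw [Matrix.mul_add, Matrix.add_mul, Matrix.mul_one,
        Matrix.mul_nonsing_inv _ hVNinv_unit]
      have e2 : VNc⁻¹ * ((Tᵀ)⁻¹ * (Tᵀ)⁻¹) * (VNc⁻¹)⁻¹
          = (VNc⁻¹ * (Tᵀ)⁻¹ * (VNc⁻¹)⁻¹) * (VNc⁻¹ * (Tᵀ)⁻¹ * (VNc⁻¹)⁻¹) := by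
        calc VNc⁻¹ * ((Tᵀ)⁻¹ * (Tᵀ)⁻¹) * (VNc⁻¹)⁻¹
            = VNc⁻¹ * (Tᵀ)⁻¹ * ((VNc⁻¹)⁻¹ * VNc⁻¹) * ((Tᵀ)⁻¹ * (VNc⁻¹)⁻¹) := by
              rw [Matrix.nonsing_inv_mul _ hVNinv_unit, Matrix.mul_one]
              simp only [Matrix.mul_assoc]
          _ = (VNc⁻¹ * (Tᵀ)⁻¹ * (VNc⁻¹)⁻¹) * (VNc⁻¹ * (Tᵀ)⁻¹ * (VNc⁻¹)⁻¹) := by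
              simp only [Matrix.mul_assoc]
      rw [e2, hVNTinv, neg_mul_neg, hK2c]
    have hQeig : ∀ μ : ℂ, (VNc⁻¹ * Kcᵀ * (VNc⁻¹)⁻¹).charpoly.IsRoot μ
        → μ.im = 0 ∧ 0 < μ.re := by
      intro μ h
      rw [charpoly_root_conj (VNc⁻¹) (Kcᵀ) hVNinv_unit, charpoly_root_transpose] at h
      exact hKeig μ h
    have hKQ : Kc = VNc⁻¹ * Kcᵀ * (VNc⁻¹)⁻¹ := sqrt_eq _ _ hQsq hKeig hQeig
    rw [hVNinvinv] at hKQ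
    calc Kcᵀ * VNc = (VNc * VNc⁻¹) * (Kcᵀ * VNc) := by
          rw [Matrix.mul_nonsing_inv _ hVNunit, Matrix.one_mul]
      _ = VNc * (VNc⁻¹ * Kcᵀ * VNc) := by simp only [Matrix.mul_assoc]
      _ = VNc * Kc := by rw [← hKQ]
  -- claim 1
  have claim1 : Mc * Vc * (Vc - Complex.I • Oc)⁻¹ * Vc * Mcᵀ = Vc + Complex.I • Oc := by
    set SP : Matrix (Fin n ⊕ Fin n) (Fin n ⊕ Fin n) ℂ := S + Complex.I • 1 with hSP_def
    set SM : Matrix (Fin n ⊕ Fin n) (Fin n ⊕ Fin n) ℂ := S - Complex.I • 1 with hSM_def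
    have hfact : Vc - Complex.I • Oc = SP * (-Oc) := by
      rw [hSP_def, Matrix.add_mul, Matrix.smul_mul, Matrix.one_mul, Matrix.mul_neg,
        hS_def, Matrix.mul_assoc, hOO, mul_neg_one, neg_neg, smul_neg, ← sub_eq_add_neg]
    have hSPeq : SP = (Vc - Complex.I • Oc) * Oc := by
      rw [hfact, Matrix.mul_assoc, Matrix.neg_mul, hOO, neg_neg, Matrix.mul_one]
    have hSPunit : IsUnit SP.det := by
      rw [hSPeq, Matrix.det_mul]
      exact ((Matrix.isUnit_iff_isUnit_det _).mp hAmpd.isUnit).mul hOunit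
    have hAinv : (Vc - Complex.I • Oc)⁻¹ = Oc * SP⁻¹ := by
      rw [hfact, Matrix.mul_inv_rev, matInvNeg _ hOunit, hOinv, neg_neg]
    have hMSP : Mc * SP = SP * Mc := by
      rw [hSP_def, Matrix.mul_add, Matrix.add_mul, hMcommc, Matrix.mul_smul,
        Matrix.smul_mul, Matrix.mul_one, Matrix.one_mul]
    have hMSPinv : Mc * SP⁻¹ = SP⁻¹ * Mc := comm_inv _ _ hMSP hSPunit
    have hSMSP : SM * SP = S * S + 1 := by
      rw [hSM_def, hSP_def]
      simp only [Matrix.sub_mul, Matrix.add_mul, Matrix.mul_add, Matrix.mul_sub,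
        Matrix.smul_mul, Matrix.mul_smul, Matrix.one_mul, Matrix.mul_one,
        smul_add, smul_sub, smul_smul, Complex.I_mul_I, neg_one_smul, one_smul]
      abel
    have hSS : (1 + S⁻¹ * S⁻¹) * S = S⁻¹ * (SM * SP) := by
      rw [hSMSP, Matrix.add_mul, Matrix.one_mul, Matrix.mul_add, Matrix.mul_one,
        Matrix.mul_assoc, Matrix.nonsing_inv_mul _ hSunit, Matrix.mul_one,
        ← Matrix.mul_assoc, Matrix.nonsing_inv_mul _ hSunit, Matrix.one_mul]
    have hSinvV : S⁻¹ * Vc = -Oc := by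
      rw [hS_def, Matrix.mul_inv_rev, Matrix.mul_assoc,
        Matrix.nonsing_inv_mul _ hVunit, Matrix.mul_one, hOinv]
    calc Mc * Vc * (Vc - Complex.I • Oc)⁻¹ * Vc * Mcᵀ
        = Mc * Vc * (Oc * SP⁻¹) * (Vc * Mcᵀ) := by
          rw [hAinv]; simp only [Matrix.mul_assoc]
      _ = Mc * S * SP⁻¹ * (Mc * Vc) := by
          rw [hMVsym, hS_def]; simp only [Matrix.mul_assoc]
      _ = Mc * S * (Mc * SP⁻¹) * Vc := by
          rw [hMSPinv]; simp only [Matrix.mul_assoc]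
      _ = Mc * (Mc * S) * SP⁻¹ * Vc := by
          have h' : ∀ Z : Matrix (Fin n ⊕ Fin n) (Fin n ⊕ Fin n) ℂ,
              S * (Mc * Z) = Mc * (S * Z) := fun Z => by
            rw [← Matrix.mul_assoc, ← hMcommc, Matrix.mul_assoc]
          simp only [Matrix.mul_assoc]
          rw [h']
      _ = (Mc * Mc) * S * SP⁻¹ * Vc := by simp only [Matrix.mul_assoc]
      _ = S⁻¹ * (SM * SP) * SP⁻¹ * Vc := by rw [hM2c, hSS]
      _ = S⁻¹ * SM * (SP * SP⁻¹) * Vc := by simp only [Matrix.mul_assoc]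
      _ = S⁻¹ * SM * Vc := by rw [Matrix.mul_nonsing_inv _ hSPunit, Matrix.mul_one]
      _ = S⁻¹ * (S * Vc) - Complex.I • (S⁻¹ * Vc) := by
          rw [hSM_def, Matrix.mul_sub, Matrix.sub_mul, Matrix.mul_smul,
            Matrix.mul_one, Matrix.smul_mul]
          simp only [Matrix.mul_assoc]
      _ = Vc + Complex.I • Oc := by
          rw [hSinvV, ← Matrix.mul_assoc, Matrix.nonsing_inv_mul _ hSunit,
            Matrix.one_mul, smul_neg, sub_neg_eq_add]
  -- claim 2 middle identity
  have claim2 : (VNc - Complex.I • oc)⁻¹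
      = Kc⁻¹ * VNc⁻¹ * (VNc + Complex.I • oc) * VNc⁻¹ * (Kcᵀ)⁻¹ := by
    have hKTinv : Kc * T⁻¹ = T⁻¹ * Kc := comm_inv _ _ hKcommc hTunit
    have hKinvTinv : T⁻¹ * Kc⁻¹ = Kc⁻¹ * T⁻¹ := comm_inv _ _ hKTinv.symm hKunit
    have hKTc : Kcᵀ = VNc * Kc * VNc⁻¹ := by
      calc Kcᵀ = Kcᵀ * (VNc * VNc⁻¹) := by
            rw [Matrix.mul_nonsing_inv _ hVNunit, Matrix.mul_one]
        _ = (Kcᵀ * VNc) * VNc⁻¹ := by simp only [Matrix.mul_assoc]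
        _ = VNc * Kc * VNc⁻¹ := by rw [hKVNsym]
    have hKTinv' : (Kcᵀ)⁻¹ = VNc * Kc⁻¹ * VNc⁻¹ := by
      rw [hKTc, conjug_inv _ _ hVNunit hKunit]
    have hVNoinv : VNc⁻¹ * oc = -T⁻¹ := by
      rw [hT_def, Matrix.mul_inv_rev, hoinv, Matrix.mul_neg, neg_neg]
    have h1 : VNc⁻¹ * (VNc + Complex.I • oc) = 1 - Complex.I • T⁻¹ := by
      rw [Matrix.mul_add, Matrix.nonsing_inv_mul _ hVNunit, Matrix.mul_smul,
        hVNoinv, smul_neg, ← sub_eq_add_neg]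
    have h2 : VNc⁻¹ * (VNc - Complex.I • oc) = 1 + Complex.I • T⁻¹ := by
      rw [Matrix.mul_sub, Matrix.nonsing_inv_mul _ hVNunit, Matrix.mul_smul,
        hVNoinv, smul_neg, sub_neg_eq_add]
    have hKcomm1 : (1 - Complex.I • T⁻¹) * Kc⁻¹ = Kc⁻¹ * (1 - Complex.I • T⁻¹) := by
      rw [Matrix.sub_mul, Matrix.mul_sub, Matrix.one_mul, Matrix.mul_one,
        Matrix.smul_mul, Matrix.mul_smul, hKinvTinv]
    have hKKunit : IsUnit (Kc * Kc).det := by rw [Matrix.det_mul]; exact hKunit.mul hKunit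
    have hprod : (1 - Complex.I • T⁻¹) * (1 + Complex.I • T⁻¹) = 1 + T⁻¹ * T⁻¹ := by
      simp only [Matrix.sub_mul, Matrix.add_mul, Matrix.mul_add, Matrix.mul_sub,
        Matrix.smul_mul, Matrix.mul_smul, Matrix.one_mul, Matrix.mul_one,
        smul_add, smul_sub, smul_smul, Complex.I_mul_I, neg_one_smul, one_smul]
      abel
    refine Matrix.inv_eq_left_inv ?_
    calc Kc⁻¹ * VNc⁻¹ * (VNc + Complex.I • oc) * VNc⁻¹ * (Kcᵀ)⁻¹ * (VNc - Complex.I • oc)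
        = Kc⁻¹ * (VNc⁻¹ * (VNc + Complex.I • oc)) * (VNc⁻¹ * VNc) * (Kc⁻¹ *
            (VNc⁻¹ * (VNc - Complex.I • oc))) := by
          rw [hKTinv']; simp only [Matrix.mul_assoc]
      _ = Kc⁻¹ * (1 - Complex.I • T⁻¹) * (Kc⁻¹ * (1 + Complex.I • T⁻¹)) := by
          rw [h1, h2, Matrix.nonsing_inv_mul _ hVNunit, Matrix.mul_one]
      _ = Kc⁻¹ * ((1 - Complex.I • T⁻¹) * Kc⁻¹) * (1 + Complex.I • T⁻¹) := by
          simp only [Matrix.mul_assoc]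
      _ = Kc⁻¹ * Kc⁻¹ * ((1 - Complex.I • T⁻¹) * (1 + Complex.I • T⁻¹)) := by
          rw [hKcomm1]; simp only [Matrix.mul_assoc]
      _ = (Kc * Kc)⁻¹ * (Kc * Kc) := by
          rw [hprod, ← hK2c, Matrix.mul_inv_rev]
      _ = 1 := Matrix.nonsing_inv_mul _ hKKunit
  -- transpose of XP
  have hXPTc : (cm XP)ᵀ = VNc⁻¹ * (Kcᵀ)⁻¹ * Xc * Vc * Mcᵀ := by
    rw [hXPc]
    simp only [Matrix.transpose_mul, Matrix.transpose_nonsing_inv, hVNsym, hVsym,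
      Matrix.transpose_transpose]
    simp only [Matrix.mul_assoc]
  -- assembly
  have hXPterm : cm XP * (VNc + Complex.I • oc) * (cm XP)ᵀ
      = Mc * Vc * (Xcᵀ * (VNc - Complex.I • oc)⁻¹ * Xc) * Vc * Mcᵀ := by
    rw [hXPTc, hXPc, claim2]
    simp only [Matrix.mul_assoc]
  calc cm YP + Complex.I • Oc - Complex.I • (cm XP * oc * (cm XP)ᵀ)
      = (Vc + Complex.I • Oc) - cm XP * (VNc + Complex.I • oc) * (cm XP)ᵀ := by
        rw [hYPc]
        rw [Matrix.mul_add, Matrix.add_mul, Matrix.mul_smul, Matrix.smul_mul]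
        abel
    _ = Mc * Vc * (Vc - Complex.I • Oc)⁻¹ * Vc * Mcᵀ
        - Mc * Vc * (Xcᵀ * (VNc - Complex.I • oc)⁻¹ * Xc) * Vc * Mcᵀ := by
        rw [claim1, hXPterm]
    _ = Mc * Vc * ((Vc - Complex.I • Oc)⁻¹ - Xcᵀ * (VNc - Complex.I • oc)⁻¹ * Xc)
          * Vc * Mcᵀ := by
        rw [Matrix.mul_sub, Matrix.sub_mul, Matrix.sub_mul]
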